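/- Let X be a nonnegative integrable random variable, let s > 0, and let Σ : (0,∞) → (0,∞) be a function that is differentiable at K = s and satisfies E[(K − X)_+] = p_K(s, Σ(K)) for all K in a neighborhood of s. Assume moreover that K ↦ E[(K − X)_+] is differentiable at K = s with derivative P[X < s]. Then Σ′(s) = (2√(Σ(s)) / (s·φ(√(Σ(s))/2))) · (P[X < s] − Φ(√(Σ(s))/2)). (Static version of the at-the-money skew formula, equation (2.2) of the paper.) -/

import Mathlib

open MeasureTheory ProbabilityTheory Real Set

/-- Standard normal density. -/
noncomputable def stdPhi (x : ℝ) : ℝ := Real.exp (-x ^ 2 / 2) / Real.sqrt (2 * Real.pi)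

/-- Standard normal cumulative distribution function. -/
noncomputable def stdCDF (x : ℝ) : ℝ := ∫ y in Set.Iic x, stdPhi y

/-- `d₊(s,t)` in the Black–Scholes formula, with strike `K`. -/
noncomputable def dPlus (s K t : ℝ) : ℝ := (Real.log (s / K) + t / 2) / Real.sqrt t

/-- `d₋(s,t)` in the Black–Scholes formula, with strike `K`. -/
noncomputable def dMinus (s K t : ℝ) : ℝ := (Real.log (s / K) - t / 2) / Real.sqrt t

/-- Black–Scholes put price `p_K(s,t)`. -/
noncomputable def putBS (K s t : ℝ) : ℝ :=
  K * stdCDF (-dMinus s K t) - s * stdCDF (-dPlus s K t)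

lemma stdPhi_cont : Continuous stdPhi := by
  unfold stdPhi; fun_prop

lemma stdPhi_pos (x : ℝ) : 0 < stdPhi x :=
  div_pos (Real.exp_pos _) (Real.sqrt_pos.mpr (by positivity))

lemma stdPhi_neg (x : ℝ) : stdPhi (-x) = stdPhi x := by
  simp [stdPhi, neg_sq]

lemma stdPhi_integrable : Integrable stdPhi := by
  have h : Integrable (fun y : ℝ => Real.exp (-(1/2) * y ^ 2)) :=
    integrable_exp_neg_mul_sq (by norm_num)
  have h2 := h.div_const (Real.sqrt (2 * Real.pi))
  refine h2.congr (Filter.Eventually.of_forall fun y => ?_)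
  unfold stdPhi; ring_nf

lemma hasDerivAt_stdCDF (x : ℝ) : HasDerivAt stdCDF (stdPhi x) x := by
  have hint := stdPhi_integrable
  have key : stdCDF = fun y => stdCDF 0 + ∫ t in (0:ℝ)..y, stdPhi t := by
    funext y
    have h := intervalIntegral.integral_Iic_sub_Iic (μ := volume) (f := stdPhi)
      hint.integrableOn hint.integrableOn (a := 0) (b := y)
    simp only [stdCDF]
    linarith
  rw [key]
  have h := (hasDerivAt_const x (stdCDF 0)).add
    (intervalIntegral.integral_hasDerivAt_right (a := 0) (hint.intervalIntegrable)
      (hint.aestronglyMeasurable.stronglyMeasurableAtFilter) stdPhi_cont.continuousAt)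
  simpa [Pi.add_def] using h

/-- Static version of the at-the-money skew formula: if `Σ` is differentiable at `s` and the
implied-variance relation `E[(K - X)₊] = p_K(s, Σ(K))` holds near `s`, and the put expectation
is differentiable at `K = s` with derivative `P[X < s]`, then
`Σ'(s) = (2√Σ(s)/(s φ(√Σ(s)/2))) (P[X < s] - Φ(√Σ(s)/2))`. -/
theorem atm_skew_formula {Ω : Type*} [MeasurableSpace Ω]
    (P : Measure Ω) [IsProbabilityMeasure P] (X : Ω → ℝ)
    (hXpos : ∀ ω, 0 ≤ X ω) (hX : Integrable X P)
    (s : ℝ) (hs : 0 < s) (Sig : ℝ → ℝ) (hSigPos : ∀ K, 0 < K → 0 < Sig K)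
    (Sig' : ℝ) (hSigDiff : HasDerivAt Sig Sig' s)
    (hrel : ∀ᶠ K in nhds s, ∫ ω, max (K - X ω) 0 ∂P = putBS K s (Sig K))
    (hput : HasDerivAt (fun K : ℝ => ∫ ω, max (K - X ω) 0 ∂P)
      ((P {ω | X ω < s}).toReal) s) :
    Sig' = 2 * Real.sqrt (Sig s) / (s * stdPhi (Real.sqrt (Sig s) / 2)) *
      ((P {ω | X ω < s}).toReal - stdCDF (Real.sqrt (Sig s) / 2)) := by
  have ht : 0 < Sig s := hSigPos s hs
  have hr : 0 < Real.sqrt (Sig s) := Real.sqrt_pos.mpr ht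
  -- derivative of K ↦ log (s / K) at s
  have hKpos : ∀ᶠ K in nhds s, 0 < K := eventually_gt_nhds hs
  have hlog : HasDerivAt (fun K => Real.log (s / K)) (0 - 1/s) s := by
    have h1 : HasDerivAt (fun K => Real.log s - Real.log K) (0 - 1/s) s :=
      (hasDerivAt_const s (Real.log s)).sub (by simpa [one_div] using Real.hasDerivAt_log hs.ne')
    refine h1.congr_of_eventuallyEq ?_
    filter_upwards [hKpos] with K hK
    rw [Real.log_div hs.ne' hK.ne']
  -- derivative of K ↦ √(Sig K) at s
  have hw : HasDerivAt (fun K => Real.sqrt (Sig K)) (1 / (2 * Real.sqrt (Sig s)) * Sig') s :=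
    (Real.hasDerivAt_sqrt ht.ne').comp s hSigDiff
  -- numerators
  have hnm : HasDerivAt (fun K => Real.log (s / K) - Sig K / 2) ((0 - 1/s) - Sig' / 2) s :=
    hlog.sub (hSigDiff.div_const 2)
  have hnp : HasDerivAt (fun K => Real.log (s / K) + Sig K / 2) ((0 - 1/s) + Sig' / 2) s :=
    hlog.add (hSigDiff.div_const 2)
  have hdm : HasDerivAt (fun K => (Real.log (s / K) - Sig K / 2) / Real.sqrt (Sig K))
      ((((0 - 1/s) - Sig' / 2) * Real.sqrt (Sig s)
        - (Real.log (s / s) - Sig s / 2) * (1 / (2 * Real.sqrt (Sig s)) * Sig'))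
        / Real.sqrt (Sig s) ^ 2) s := hnm.div hw hr.ne'
  have hdp : HasDerivAt (fun K => (Real.log (s / K) + Sig K / 2) / Real.sqrt (Sig K))
      ((((0 - 1/s) + Sig' / 2) * Real.sqrt (Sig s)
        - (Real.log (s / s) + Sig s / 2) * (1 / (2 * Real.sqrt (Sig s)) * Sig'))
        / Real.sqrt (Sig s) ^ 2) s := hnp.div hw hr.ne'
  have hcm := (hasDerivAt_stdCDF
      (-((Real.log (s / s) - Sig s / 2) / Real.sqrt (Sig s)))).comp s hdm.neg
  have hcp := (hasDerivAt_stdCDF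
      (-((Real.log (s / s) + Sig s / 2) / Real.sqrt (Sig s)))).comp s hdp.neg
  have hg := ((hasDerivAt_id s).mul hcm).sub (hcp.const_mul s)
  simp only [putBS, dMinus, dPlus] at hrel
  have hD := ((hg.congr_of_eventuallyEq hrel).unique hput).symm
  -- simplify values at K = s
  simp only [Function.comp_apply, id_eq, Pi.neg_apply] at hD
  rw [div_self hs.ne', Real.log_one] at hD
  have hsq : Real.sqrt (Sig s) * Real.sqrt (Sig s) = Sig s := Real.mul_self_sqrt ht.le
  set r := Real.sqrt (Sig s) with hrdef
  rw [← hsq] at hD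
  have harg : -((0 - r * r / 2) / r) = r / 2 := by field_simp; ring
  have harg2 : -((0 + r * r / 2) / r) = -(r / 2) := by field_simp; ring
  rw [harg, harg2, stdPhi_neg] at hD
  have hb : stdPhi (r / 2) ≠ 0 := (stdPhi_pos _).ne'
  rw [hD]
  field_simp
  ring
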